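/- Let q ≥ 2 and m ≥ 1 be integers and let C ⊆ Q^m be a nonempty code. Then for every δ with 0 ≤ δ ≤ 1 and every real x with 0 < x < 1, one has α_q(δ) ≥ (1/m)·log_q( Σ_{c∈C} 1/B_c(x) ) + δ·log_q x. -/

import Mathlib

open Finset

/-- `minDistGE q n d C` : any two distinct codewords of `C ⊆ Q^n` have Hamming
distance at least `d`. -/
def minDistGE (q n d : ℕ) (C : Finset (Fin n → Fin q)) : Prop :=
  ∀ u ∈ C, ∀ v ∈ C, u ≠ v → d ≤ hammingDist u v

/-- `Aq q n d` : maximum cardinality of a `q`-ary code of length `n` with minimum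
Hamming distance at least `d`. -/
noncomputable def Aq (q n d : ℕ) : ℕ :=
  sSup {k : ℕ | ∃ C : Finset (Fin n → Fin q), minDistGE q n d C ∧ C.card = k}

/-- `alphaQ q δ = limsup_{n→∞} (1/n)·log_q A_q(n, ⌈δn⌉)`. -/
noncomputable def alphaQ (q : ℕ) (δ : ℝ) : ℝ :=
  Filter.limsup (fun n : ℕ => Real.logb q (Aq q n ⌈δ * (n : ℝ)⌉₊) / n) Filter.atTop

/-- The local distance enumerator `B_c(x) = Σ_j |{y ∈ C : d(c,y) = j}| x^j` of `c` in `C`. -/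
noncomputable def localDistEnum (q m : ℕ) (C : Finset (Fin m → Fin q))
    (c : Fin m → Fin q) (x : ℝ) : ℝ :=
  ∑ y ∈ C, x ^ hammingDist c y


lemma caro_wei {α : Type*} [DecidableEq α] (r : α → α → Prop) [DecidableRel r]
    (hr : Symmetric r) (V : Finset α) :
    ∃ I ⊆ V, (∀ u ∈ I, ∀ v ∈ I, u ≠ v → ¬ r u v) ∧
      ∑ u ∈ V, (1 : ℝ) / (V.filter fun v => v = u ∨ r u v).card ≤ I.card := by
  induction V using Finset.strongInduction with
  | _ V ih =>
  rcases V.eq_empty_or_nonempty with rfl | hV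
  · exact ⟨∅, by simp⟩
  · obtain ⟨v, hvV, hmin⟩ := V.exists_min_image
      (fun u => ((V.filter fun w => w = u ∨ r u w).card : ℝ)) hV
    set p : α → Prop := fun w => w = v ∨ r v w with hp
    have hvp : p v := Or.inl rfl
    set V' : Finset α := V.filter (fun w => ¬ p w) with hV'
    have hV'sub : V' ⊆ V := filter_subset _ _
    have hvV' : v ∉ V' := fun h => (mem_filter.mp h).2 hvp
    have hss : V' ⊂ V := ssubset_of_subset_of_ne hV'sub (fun h => hvV' (h ▸ hvV))
    obtain ⟨I', hI'sub, hind', hsum'⟩ := ih V' hss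
    refine ⟨insert v I', ?_, ?_, ?_⟩
    · exact insert_subset hvV (hI'sub.trans hV'sub)
    · intro a ha b hb hab
      rcases mem_insert.mp ha with hav | ha2
      · rcases mem_insert.mp hb with hbv | hb2
        · exact absurd (hav.trans hbv.symm) hab
        · subst hav
          exact fun h => (mem_filter.mp (hI'sub hb2)).2 (Or.inr h)
      · rcases mem_insert.mp hb with hbv | hb2
        · subst hbv
          exact fun h => (mem_filter.mp (hI'sub ha2)).2 (Or.inr (hr h))
        · exact hind' a ha2 b hb2 hab
    · have hvI' : v ∉ I' := fun h => hvV' (hI'sub h)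
      rw [card_insert_of_notMem hvI']
      have hsplit : ∑ u ∈ V, (1:ℝ) / (V.filter fun w => w = u ∨ r u w).card
          = ∑ u ∈ V.filter p, (1:ℝ) / (V.filter fun w => w = u ∨ r u w).card
            + ∑ u ∈ V', (1:ℝ) / (V.filter fun w => w = u ∨ r u w).card :=
        (sum_filter_add_sum_filter_not V p _).symm
      have hNcard : (V.filter p).card = (V.filter fun w => w = v ∨ r v w).card := rfl
      have hDvpos : (0:ℝ) < (V.filter fun w => w = v ∨ r v w).card := by
        have : v ∈ V.filter fun w => w = v ∨ r v w := mem_filter.mpr ⟨hvV, Or.inl rfl⟩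
        exact_mod_cast card_pos.mpr ⟨v, this⟩
      have h1 : ∑ u ∈ V.filter p, (1:ℝ) / (V.filter fun w => w = u ∨ r u w).card ≤ 1 := by
        calc ∑ u ∈ V.filter p, (1:ℝ) / (V.filter fun w => w = u ∨ r u w).card
            ≤ ∑ u ∈ V.filter p, (1:ℝ) / (V.filter fun w => w = v ∨ r v w).card := by
              refine sum_le_sum fun u hu => ?_
              exact one_div_le_one_div_of_le hDvpos (hmin u (mem_of_mem_filter u hu))
          _ = (V.filter p).card / (V.filter fun w => w = v ∨ r v w).card := by
              rw [sum_const, nsmul_eq_mul]; ring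
          _ = 1 := by rw [hNcard]; field_simp
      have h2 : ∑ u ∈ V', (1:ℝ) / (V.filter fun w => w = u ∨ r u w).card ≤ (I'.card : ℝ) := by
        refine le_trans (sum_le_sum fun u hu => ?_) hsum'
        have hpos : (0:ℝ) < (V'.filter fun w => w = u ∨ r u w).card := by
          have : u ∈ V'.filter fun w => w = u ∨ r u w := mem_filter.mpr ⟨hu, Or.inl rfl⟩
          exact_mod_cast card_pos.mpr ⟨u, this⟩
        refine one_div_le_one_div_of_le hpos ?_
        exact_mod_cast card_le_card (filter_subset_filter _ hV'sub)
      rw [hsplit]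
      push_cast
      linarith


lemma ham_reindex {n q : ℕ} {ι : Type*} [Fintype ι] [DecidableEq ι] (e : Fin n ≃ ι)
    (a b : ι → Fin q) : hammingDist (a ∘ e) (b ∘ e) = hammingDist a b := by
  unfold hammingDist
  refine Finset.card_bij (fun i _ => e i) (fun i hi => ?_) (fun i _ j _ h => e.injective h)
    (fun j hj => ⟨e.symm j, ?_, by simp⟩)
  · simpa using (mem_filter.mp hi).2
  · simp only [mem_filter, mem_univ, true_and] at hj ⊢
    simpa using hj

lemma ham_prod {k m q : ℕ} (g h : Fin k → Fin m → Fin q) :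
    hammingDist (fun p : Fin m × Fin k => g p.2 p.1) (fun p : Fin m × Fin k => h p.2 p.1)
      = ∑ j, hammingDist (g j) (h j) := by
  unfold hammingDist
  simp only [Finset.card_filter, Fintype.sum_prod_type]
  rw [Finset.sum_comm]

lemma aq_ge {q n d : ℕ} (C : Finset (Fin n → Fin q)) (h : minDistGE q n d C) :
    C.card ≤ Aq q n d := by
  refine le_csSup ⟨Fintype.card (Fin n → Fin q), ?_⟩ ⟨C, h, rfl⟩
  rintro k ⟨C', _, rfl⟩
  exact C'.card_le_univ

lemma key (q m : ℕ) (C : Finset (Fin m → Fin q)) (hC : C.Nonempty)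
    (x : ℝ) (hx0 : 0 < x) (hx1 : x < 1) (k d : ℕ) (hd : 1 ≤ d) :
    (∑ c ∈ C, 1 / localDistEnum q m C c x) ^ k * x ^ (d - 1) ≤ (Aq q (m * k) d : ℝ) := by
  classical
  set e : Fin (m * k) ≃ Fin m × Fin k := finProdFinEquiv.symm with he
  set φ : (Fin k → Fin m → Fin q) → (Fin (m * k) → Fin q) :=
    fun g => (fun p : Fin m × Fin k => g p.2 p.1) ∘ e with hφ
  have hφinj : Function.Injective φ := by
    intro g g' hgg
    funext j i
    have := congrFun hgg (e.symm (i, j))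
    simpa [hφ] using this
  have hamφ : ∀ g h, hammingDist (φ g) (φ h) = ∑ j, hammingDist (g j) (h j) := by
    intro g h
    rw [hφ]
    rw [ham_reindex e, ham_prod]
  set T : Finset (Fin k → Fin m → Fin q) := Fintype.piFinset fun _ : Fin k => C with hT
  set V : Finset (Fin (m * k) → Fin q) := T.image φ with hV
  have hBpos : ∀ c, 0 < localDistEnum q m C c x := fun c =>
    Finset.sum_pos (fun y _ => pow_pos hx0 _) hC
  -- weight identity
  have hW : ∀ g ∈ T, ∑ v ∈ V, x ^ hammingDist (φ g) v = ∏ j, localDistEnum q m C (g j) x := by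
    intro g hg
    rw [hV, Finset.sum_image (fun a _ b _ h => hφinj h)]
    have : ∀ h ∈ T, x ^ hammingDist (φ g) (φ h) = ∏ j, x ^ hammingDist (g j) (h j) := by
      intro h _
      rw [hamφ]
      exact (Finset.prod_pow_eq_pow_sum univ (fun j => hammingDist (g j) (h j)) x).symm
    rw [Finset.sum_congr rfl this, hT]
    simp only [localDistEnum]
    exact (Finset.prod_univ_sum (fun _ : Fin k => C)
      (fun j y => x ^ hammingDist (g j) y)).symm
  obtain ⟨I, hIV, hind, hsum⟩ := caro_wei (fun u v => hammingDist u v < d)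
    (fun u v h => by simpa [hammingDist_comm v u] using h) V
  have hcode : minDistGE q (m * k) d I := fun u hu v hv huv =>
    not_lt.mp (hind u hu v hv huv)
  refine le_trans ?_ (le_trans hsum ?_)
  swap
  · exact_mod_cast aq_ge I hcode
  -- now show S^k * x^(d-1) ≤ ∑_{u∈V} 1/#closed-ball
  have hfil : ∀ u, (V.filter fun v => v = u ∨ hammingDist u v < d)
      = V.filter fun v => hammingDist u v < d := by
    intro u
    refine Finset.filter_congr fun v _ => ?_
    constructor
    · rintro (rfl | h)
      · simpa [hammingDist_self] using Nat.lt_of_lt_of_le Nat.zero_lt_one hd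
      · exact h
    · exact Or.inr
  have hstep : ∀ u ∈ V, x ^ (d - 1) / (∑ v ∈ V, x ^ hammingDist u v)
      ≤ (1 : ℝ) / (V.filter fun v => v = u ∨ hammingDist u v < d).card := by
    intro u hu
    rw [hfil]
    have hWpos : 0 < ∑ v ∈ V, x ^ hammingDist u v :=
      Finset.sum_pos (fun v _ => pow_pos hx0 _) ⟨u, hu⟩
    have hDpos : (0:ℝ) < (V.filter fun v => hammingDist u v < d).card := by
      have : u ∈ V.filter fun v => hammingDist u v < d :=
        mem_filter.mpr ⟨hu, by simpa [hammingDist_self] using Nat.lt_of_lt_of_le Nat.zero_lt_one hd⟩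
      exact_mod_cast card_pos.mpr ⟨u, this⟩
    rw [div_le_div_iff₀ hWpos hDpos]
    calc x ^ (d-1) * (V.filter fun v => hammingDist u v < d).card
        = ∑ v ∈ V.filter (fun v => hammingDist u v < d), x ^ (d-1) := by
          rw [sum_const, nsmul_eq_mul]; ring
      _ ≤ ∑ v ∈ V.filter (fun v => hammingDist u v < d), x ^ hammingDist u v := by
          refine sum_le_sum fun v hv => ?_
          exact pow_le_pow_of_le_one hx0.le hx1.le
            (Nat.le_sub_one_of_lt (mem_filter.mp hv).2)
      _ ≤ (∑ v ∈ V, x ^ hammingDist u v) := by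
          exact sum_le_sum_of_subset_of_nonneg (filter_subset _ _)
            (fun v _ _ => (pow_pos hx0 _).le)
      _ = 1 * (∑ v ∈ V, x ^ hammingDist u v) := by ring
  refine le_trans ?_ (Finset.sum_le_sum hstep)
  -- ∑_{u∈V} x^(d-1)/W u = x^(d-1) * ∑ 1/W = x^(d-1) * S^k
  have : ∑ u ∈ V, x ^ (d-1) / (∑ v ∈ V, x ^ hammingDist u v)
      = x ^ (d-1) * ∑ g ∈ T, (1 / ∏ j, localDistEnum q m C (g j) x) := by
    rw [hV, Finset.sum_image (fun a _ b _ h => hφinj h), Finset.mul_sum]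
    refine Finset.sum_congr rfl fun g hg => ?_
    rw [← hV, hW g hg]
    ring
  rw [this]
  have hSk : ∑ g ∈ T, (1 / ∏ j, localDistEnum q m C (g j) x)
      = (∑ c ∈ C, 1 / localDistEnum q m C c x) ^ k := by
    rw [← Fin.prod_const k, Finset.prod_univ_sum (fun _ : Fin k => C)
      (fun _ y => 1 / localDistEnum q m C y x)]
    refine Finset.sum_congr rfl fun g _ => ?_
    simp [one_div, Finset.prod_inv_distrib]
  rw [hSk]
  exact le_of_eq (mul_comm _ _)


lemma aq_le (q n d : ℕ) (hq : 1 ≤ q) : Aq q n d ≤ q ^ n := by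
  refine csSup_le ⟨0, ∅, fun u hu => by simp at hu, card_empty⟩ ?_
  rintro k ⟨C', _, rfl⟩
  calc C'.card ≤ Fintype.card (Fin n → Fin q) := C'.card_le_univ
    _ = q ^ n := by simp [Fintype.card_fun]

theorem generalized_GV_asymptotic_caro_wei (q m : ℕ) (hq : 2 ≤ q) (hm : 1 ≤ m)
    (C : Finset (Fin m → Fin q)) (hC : C.Nonempty)
    (δ : ℝ) (hδ0 : 0 ≤ δ) (hδ1 : δ ≤ 1) (x : ℝ) (hx0 : 0 < x) (hx1 : x < 1) :
    (1 / (m : ℝ)) * Real.logb q (∑ c ∈ C, 1 / localDistEnum q m C c x)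
        + δ * Real.logb q x
      ≤ alphaQ q δ := by
  have hq1 : (1:ℝ) < (q:ℕ) := by exact_mod_cast hq.trans_lt' one_lt_two
  have hm0 : (0:ℝ) < m := by exact_mod_cast hm
  set S : ℝ := ∑ c ∈ C, 1 / localDistEnum q m C c x with hS
  have hBpos : ∀ c, 0 < localDistEnum q m C c x := fun c =>
    Finset.sum_pos (fun y _ => pow_pos hx0 _) hC
  have hB1 : ∀ c ∈ C, 1 ≤ localDistEnum q m C c x := by
    intro c hc
    calc (1:ℝ) = x ^ hammingDist c c := by simp [hammingDist_self]
      _ ≤ ∑ y ∈ C, x ^ hammingDist c y :=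
        Finset.single_le_sum (fun y _ => (pow_pos hx0 _).le) hc
  have hSpos : 0 < S := Finset.sum_pos (fun c _ => one_div_pos.mpr (hBpos c)) hC
  have hSle : S ≤ (q:ℝ) ^ m := by
    calc S ≤ ∑ _c ∈ C, (1:ℝ) := Finset.sum_le_sum fun c hc => by
            rw [div_le_one (hBpos c)]; exact hB1 c hc
      _ = C.card := by simp
      _ ≤ (q:ℝ) ^ m := by
          have := C.card_le_univ
          have h2 : Fintype.card (Fin m → Fin q) = q ^ m := by simp [Fintype.card_fun]
          exact_mod_cast (h2 ▸ this)
  have hlogx : Real.logb q x < 0 := Real.logb_neg hq1 hx0 hx1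
  set L : ℝ := (1 / (m : ℝ)) * Real.logb q S + δ * Real.logb q x with hL
  have hL1 : L ≤ 1 := by
    have h1 : Real.logb q S ≤ Real.logb q ((q:ℝ) ^ m) :=
      Real.logb_le_logb_of_le hq1 hSpos hSle
    have h2 : Real.logb q ((q:ℝ) ^ m) = m := by
      rw [Real.logb_pow, Real.logb_self_eq_one hq1]
      ring
    have h3 : δ * Real.logb q x ≤ 0 := mul_nonpos_of_nonneg_of_nonpos hδ0 hlogx.le
    rw [hL]
    have : (1 / (m:ℝ)) * Real.logb q S ≤ 1 := by
      rw [div_mul_eq_mul_div, one_mul, div_le_one hm0]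
      linarith
    linarith
  -- the per-k bound
  have hbound : ∀ k : ℕ, 1 ≤ k →
      L ≤ Real.logb q (Aq q (m*k) ⌈δ * ((m*k : ℕ) : ℝ)⌉₊) / ((m*k : ℕ) : ℝ) := by
    intro k hk
    set n : ℕ := m * k with hn
    have hn0 : (0:ℝ) < n := by
      have : 1 ≤ n := Nat.one_le_iff_ne_zero.mpr (by positivity)
      exact_mod_cast this
    set d : ℕ := ⌈δ * (n : ℝ)⌉₊ with hd
    rcases Nat.eq_zero_or_pos d with hd0 | hd1
    · -- d = 0 : Aq = q^n, f n = 1 ≥ L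
      have huniv : minDistGE q n 0 (univ : Finset (Fin n → Fin q)) := by
        intro u _ v _ _; exact Nat.zero_le _
      have h1 : (q:ℝ) ^ n ≤ (Aq q n 0 : ℝ) := by
        have := aq_ge (univ : Finset (Fin n → Fin q)) huniv
        have h2 : (univ : Finset (Fin n → Fin q)).card = q ^ n := by
          simp [Finset.card_univ, Fintype.card_fun]
        rw [h2] at this
        exact_mod_cast this
      have h3 : (n:ℝ) ≤ Real.logb q (Aq q n 0) := by
        calc (n:ℝ) = Real.logb q ((q:ℝ)^n) := by
              rw [Real.logb_pow, Real.logb_self_eq_one hq1]; ring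
          _ ≤ _ := Real.logb_le_logb_of_le hq1 (by positivity) h1
      rw [hd0]
      calc L ≤ 1 := hL1
        _ ≤ Real.logb q (Aq q n 0) / n := by
            rw [le_div_iff₀ hn0, one_mul]; exact h3
    · -- d ≥ 1
      have hkey := key q m C hC x hx0 hx1 k d hd1
      have hAqpos : (0:ℝ) < S ^ k * x ^ (d-1) := by positivity
      have hlog1 : Real.logb q (S ^ k * x ^ (d-1)) ≤ Real.logb q (Aq q n d) :=
        Real.logb_le_logb_of_le hq1 hAqpos hkey
      have hlog2 : Real.logb q (S ^ k * x ^ (d-1))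
          = k * Real.logb q S + ((d:ℝ) - 1) * Real.logb q x := by
        rw [Real.logb_mul (by positivity) (by positivity), Real.logb_pow, Real.logb_pow]
        have : (((d-1 : ℕ)):ℝ) = (d:ℝ) - 1 := by
          have : 1 ≤ d := hd1
          push_cast [Nat.cast_sub this]
          ring
        rw [this]
      have hdle : (d:ℝ) - 1 ≤ δ * n := by
        have := Nat.ceil_lt_add_one (by positivity : (0:ℝ) ≤ δ * n)
        rw [← hd] at this
        linarith
      have hnk : (n:ℝ) = m * k := by exact_mod_cast hn
      -- L * n ≤ logb Aq
      have hmain : L * n ≤ Real.logb q (Aq q n d) := by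
        calc L * n = (k : ℝ) * Real.logb q S + (δ * n) * Real.logb q x := by
              rw [hL, hnk]
              have hk0 : (0:ℝ) < k := by exact_mod_cast hk
              field_simp
          _ ≤ (k : ℝ) * Real.logb q S + ((d:ℝ) - 1) * Real.logb q x := by
              have := mul_le_mul_of_nonpos_right hdle hlogx.le
              linarith
          _ = Real.logb q (S ^ k * x ^ (d-1)) := hlog2.symm
          _ ≤ _ := hlog1
      rw [le_div_iff₀ hn0]
      exact hmain
  -- limsup step
  have hbdd : Filter.IsBoundedUnder (· ≤ ·) Filter.atTop
      (fun n : ℕ => Real.logb q (Aq q n ⌈δ * (n : ℝ)⌉₊) / n) := by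
    refine Filter.isBoundedUnder_of ⟨1, fun n => ?_⟩
    rcases Nat.eq_zero_or_pos n with rfl | hn
    · simp
    · have hn0 : (0:ℝ) < n := by exact_mod_cast hn
      rw [div_le_one hn0]
      have hle : (Aq q n ⌈δ * (n : ℝ)⌉₊ : ℝ) ≤ (q:ℝ) ^ n := by
        exact_mod_cast aq_le q n _ (by omega)
      rcases Nat.eq_zero_or_pos (Aq q n ⌈δ * (n : ℝ)⌉₊) with h0 | hpos
      · rw [h0]; simp
      · calc Real.logb q (Aq q n ⌈δ * (n : ℝ)⌉₊) ≤ Real.logb q ((q:ℝ)^n) :=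
              Real.logb_le_logb_of_le hq1 (by exact_mod_cast hpos) hle
          _ = n := by
              rw [Real.logb_pow, Real.logb_self_eq_one hq1]; ring
  have hfreq : ∃ᶠ n in Filter.atTop,
      L ≤ Real.logb q (Aq q n ⌈δ * (n : ℝ)⌉₊) / n := by
    have htend : Filter.Tendsto (fun k : ℕ => m * (k+1)) Filter.atTop Filter.atTop := by
      apply Filter.tendsto_atTop_mono (fun k => ?_) Filter.tendsto_id
      calc (k : ℕ) ≤ k + 1 := Nat.le_succ k
        _ ≤ m * (k+1) := Nat.le_mul_of_pos_left _ hm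
    exact htend.frequently (Filter.Frequently.of_forall fun k => hbound (k+1) (Nat.le_add_left 1 k))
  exact Filter.le_limsup_of_frequently_le hfreq hbdd
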